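/- Let n ≥ 2, 1 ≤ k ≤ n−1, and let M be a cup diagram on {1,…,n} with |M| ≤ min(k, n−k). Then there is exactly one word λ : {1,…,n} → Bool taking the value true at exactly k positions such that M is oriented for λ, admissible for λ, and of degree 0 for λ. -/
import Mathlib


/-- A cup diagram on `{0,…,n-1}`: a finite set `M` of pairs `(i,j)` with `i < j`,
with pairwise disjoint endpoints, non-crossing, and such that every position
strictly between the endpoints of a cup is itself an endpoint of some cup. -/
def IsCupDiagram {n : ℕ} (M : Finset (Fin n × Fin n)) : Prop :=
  (∀ p ∈ M, p.1 < p.2) ∧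
  (∀ p ∈ M, ∀ q ∈ M, p ≠ q →
    p.1 ≠ q.1 ∧ p.1 ≠ q.2 ∧ p.2 ≠ q.1 ∧ p.2 ≠ q.2) ∧
  (∀ p ∈ M, ∀ q ∈ M, ¬(p.1 < q.1 ∧ q.1 < p.2 ∧ p.2 < q.2)) ∧
  (∀ p ∈ M, ∀ l : Fin n, p.1 < l → l < p.2 → ∃ q ∈ M, l = q.1 ∨ l = q.2)

/-- A position is free if it is not an endpoint of any pair of `M`. -/
def IsFree {n : ℕ} (M : Finset (Fin n × Fin n)) (l : Fin n) : Prop :=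
  ∀ p ∈ M, p.1 ≠ l ∧ p.2 ≠ l

/-- `M` is oriented for the word `λ` if the two endpoints of each cup carry
different letters. -/
def OrientedFor {n : ℕ} (lam : Fin n → Bool) (M : Finset (Fin n × Fin n)) : Prop :=
  ∀ p ∈ M, lam p.1 ≠ lam p.2

/-- The degree of `M` for `λ`: the number of cups `(i,j)` with `λ(i) = true`
(clockwise cups). -/
def cupDegree {n : ℕ} (lam : Fin n → Bool) (M : Finset (Fin n × Fin n)) : ℕ :=
  (M.filter (fun p => lam p.1 = true)).card

/-- `M` is admissible for `λ` if there are no free positions `i < j` with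
`λ(i) = false` (`∨`) and `λ(j) = true` (`∧`). -/
def AdmissibleFor {n : ℕ} (lam : Fin n → Bool) (M : Finset (Fin n × Fin n)) : Prop :=
  ∀ i j : Fin n, i < j → IsFree M i → IsFree M j → ¬(lam i = false ∧ lam j = true)


lemma exists_prefix {α : Type*} [LinearOrder α] (F : Finset α) (t : ℕ) (ht : t ≤ F.card) :
    ∃ S : Finset α, S ⊆ F ∧ S.card = t ∧ ∀ i ∈ F, ∀ j ∈ S, i < j → i ∈ S := by
  induction t with
  | zero => exact ⟨∅, by simp⟩
  | succ t ih =>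
    obtain ⟨S, hSF, hScard, hSdc⟩ := ih (le_of_lt (Nat.lt_of_succ_le ht))
    have hne : (F \ S).Nonempty := by
      rw [Finset.sdiff_nonempty]
      intro h
      have := Finset.card_le_card h
      omega
    obtain ⟨hxF, hxS⟩ := Finset.mem_sdiff.1 ((F \ S).min'_mem hne)
    refine ⟨insert ((F \ S).min' hne) S, Finset.insert_subset hxF hSF, ?_, ?_⟩
    · rw [Finset.card_insert_of_notMem hxS, hScard]
    · intro i hi j hj hij
      rcases Finset.mem_insert.1 hj with rfl | hjS
      · by_cases hiS : i ∈ S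
        · exact Finset.mem_insert_of_mem hiS
        · have := Finset.min'_le (F \ S) i (Finset.mem_sdiff.2 ⟨hi, hiS⟩)
          exact absurd hij (not_lt.2 this)
      · exact Finset.mem_insert_of_mem (hSdc i hi j hjS hij)

lemma uniq_prefix {α : Type*} [LinearOrder α] {F S S' : Finset α}
    (hS : S ⊆ F) (hS' : S' ⊆ F) (hc : S.card = S'.card)
    (hd : ∀ i ∈ F, ∀ j ∈ S, i < j → i ∈ S)
    (hd' : ∀ i ∈ F, ∀ j ∈ S', i < j → i ∈ S') : S = S' := by
  by_contra hne
  have h1 : ¬ S ⊆ S' := fun h => hne (Finset.eq_of_subset_of_card_le h hc.symm.le)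
  have h2 : ¬ S' ⊆ S := fun h => hne (Finset.eq_of_subset_of_card_le h hc.le).symm
  obtain ⟨x, hxS, hxS'⟩ := Finset.not_subset.1 h1
  obtain ⟨y, hyS', hyS⟩ := Finset.not_subset.1 h2
  rcases lt_trichotomy x y with h | h | h
  · exact hxS' (hd' x (hS hxS) y hyS' h)
  · exact hyS (h ▸ hxS)
  · exact hyS (hd y (hS' hyS') x hxS h)

/-- For every cup diagram `M` with at most `min(k, n-k)` cups there is exactly one
word `λ` with exactly `k` letters `∧` (`true`) such that `M` is oriented for `λ`,
admissible for `λ`, and of degree `0` for `λ`. -/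
theorem stmt14 (n k : ℕ) (hn : 2 ≤ n) (hk1 : 1 ≤ k) (hk2 : k ≤ n - 1)
    (M : Finset (Fin n × Fin n)) (hM : IsCupDiagram M) (hcard : M.card ≤ min k (n - k)) :
    ∃! lam : Fin n → Bool,
      (Finset.univ.filter (fun i => lam i = true)).card = k ∧
      OrientedFor lam M ∧ AdmissibleFor lam M ∧ cupDegree lam M = 0 := by
  classical
  obtain ⟨hlt, hdisj, hcross, hfill⟩ := hM
  set E1 := M.image Prod.fst with hE1
  set E2 := M.image Prod.snd with hE2
  set F := Finset.univ \ (E1 ∪ E2) with hF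
  set m := M.card with hm
  have hmk : m ≤ k := le_trans hcard (min_le_left _ _)
  have hmnk : m ≤ n - k := le_trans hcard (min_le_right _ _)
  have hE1card : E1.card = m := Finset.card_image_of_injOn (fun p hp q hq hpq => by
    by_contra h; exact (hdisj p hp q hq h).1 hpq)
  have hE2card : E2.card = m := Finset.card_image_of_injOn (fun p hp q hq hpq => by
    by_contra h; exact (hdisj p hp q hq h).2.2.2 hpq)
  have hE12 : Disjoint E1 E2 := by
    rw [Finset.disjoint_left]
    intro a ha hb
    obtain ⟨p, hp, rfl⟩ := Finset.mem_image.1 ha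
    obtain ⟨q, hq, hq2⟩ := Finset.mem_image.1 hb
    by_cases h : p = q
    · subst h; exact absurd hq2 (ne_of_gt (hlt p hp))
    · exact (hdisj p hp q hq h).2.1 hq2.symm
  have hEcard : (E1 ∪ E2).card = 2 * m := by
    rw [Finset.card_union_of_disjoint hE12, hE1card, hE2card]; ring
  have hFcard : F.card = n - 2 * m := by
    rw [hF, Finset.card_sdiff_of_subset (Finset.subset_univ _), hEcard, Finset.card_univ,
      Fintype.card_fin]
  have h2mn : 2 * m ≤ n := by
    have := Finset.card_le_univ (E1 ∪ E2)
    rw [hEcard] at this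
    simpa using this
  have ht : k - m ≤ F.card := by rw [hFcard]; omega
  obtain ⟨S, hSF, hScard, hSdc⟩ := exists_prefix F (k - m) ht
  have hfree_iff : ∀ i : Fin n, IsFree M i ↔ i ∈ F := by
    intro i
    simp only [IsFree, hF, Finset.mem_sdiff, Finset.mem_univ, true_and, Finset.mem_union,
      hE1, hE2, Finset.mem_image, not_or, not_exists]
    constructor
    · intro h
      constructor
      · intro p; intro hc
        exact (h p hc.1).1 hc.2
      · intro p; intro hc
        exact (h p hc.1).2 hc.2
    · intro ⟨h1, h2⟩ p hp
      exact ⟨fun he => h1 p ⟨hp, he⟩, fun he => h2 p ⟨hp, he⟩⟩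
  have hp1mem : ∀ p ∈ M, p.1 ∈ E1 := fun p hp => Finset.mem_image_of_mem _ hp
  have hp2mem : ∀ p ∈ M, p.2 ∈ E2 := fun p hp => Finset.mem_image_of_mem _ hp
  have hFnotE : ∀ i ∈ F, i ∉ E1 ∧ i ∉ E2 := by
    intro i hi
    have := Finset.mem_sdiff.1 hi
    simp only [Finset.mem_union, not_or] at this
    exact this.2
  have hSE2 : Disjoint E2 S := by
    rw [Finset.disjoint_left]
    intro a ha hb
    exact (hFnotE a (hSF hb)).2 ha
  have hp1not : ∀ p ∈ M, p.1 ∉ E2 ∪ S := by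
    intro p hp
    simp only [Finset.mem_union, not_or]
    refine ⟨fun h => Finset.disjoint_left.1 hE12 (hp1mem p hp) h, fun h => ?_⟩
    exact (hFnotE p.1 (hSF h)).1 (hp1mem p hp)
  refine ⟨fun i => decide (i ∈ E2 ∪ S), ⟨?_, ?_, ?_, ?_⟩, ?_⟩
  · have : (Finset.univ.filter (fun i => decide (i ∈ E2 ∪ S) = true)) = E2 ∪ S := by
      ext i; simp
    rw [this, Finset.card_union_of_disjoint hSE2, hE2card, hScard]
    omega
  · intro p hp
    simp only [ne_eq, decide_eq_decide]
    intro h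
    exact hp1not p hp (h.2 (Finset.mem_union_left _ (hp2mem p hp)))
  · intro i j hij hfi hfj hcon
    obtain ⟨h1, h2⟩ := hcon
    simp only [decide_eq_true_eq] at h2
    simp only [decide_eq_false_iff_not] at h1
    have hiF := (hfree_iff i).1 hfi
    have hjF := (hfree_iff j).1 hfj
    have hjS : j ∈ S := by
      rcases Finset.mem_union.1 h2 with h | h
      · exact absurd h (hFnotE j hjF).2
      · exact h
    exact h1 (Finset.mem_union_right _ (hSdc i hiF j hjS hij))
  · rw [cupDegree, Finset.card_eq_zero]
    ext p
    simp only [Finset.mem_filter, Finset.notMem_empty, iff_false, not_and,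
      decide_eq_true_eq]
    intro hp
    exact hp1not p hp
  · intro lam' ⟨hcount', hor', hadm', hdeg'⟩
    have hL1 : ∀ p ∈ M, lam' p.1 = false := by
      intro p hp
      rw [cupDegree, Finset.card_eq_zero, Finset.filter_eq_empty_iff] at hdeg'
      have := hdeg' hp
      simpa using this
    have hL2 : ∀ p ∈ M, lam' p.2 = true := by
      intro p hp
      have := hor' p hp
      rw [hL1 p hp] at this
      simpa using this.symm
    set S' := F.filter (fun i => lam' i = true) with hS'
    have hS'F : S' ⊆ F := Finset.filter_subset _ _
    have htrues : Finset.univ.filter (fun i => lam' i = true) = E2 ∪ S' := by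
      ext i
      simp only [Finset.mem_filter, Finset.mem_univ, true_and, Finset.mem_union, hS',
        Finset.mem_filter]
      constructor
      · intro hli
        by_cases hiF : i ∈ F
        · exact Or.inr ⟨hiF, hli⟩
        · left
          rw [hF, Finset.mem_sdiff] at hiF
          simp only [Finset.mem_univ, true_and, not_not] at hiF
          rcases Finset.mem_union.1 hiF with h | h
          · obtain ⟨p, hp, rfl⟩ := Finset.mem_image.1 h
            rw [hL1 p hp] at hli; exact absurd hli (by simp)
          · exact h
      · intro h
        rcases h with h | ⟨_, h⟩
        · obtain ⟨p, hp, rfl⟩ := Finset.mem_image.1 h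
          exact hL2 p hp
        · exact h
    have hS'card : S'.card = k - m := by
      rw [htrues, Finset.card_union_of_disjoint] at hcount'
      · rw [hE2card] at hcount'; omega
      · rw [Finset.disjoint_left]
        intro a ha hb
        exact (hFnotE a (hS'F hb)).2 ha
    have hS'dc : ∀ i ∈ F, ∀ j ∈ S', i < j → i ∈ S' := by
      intro i hi j hj hij
      obtain ⟨hjF, hjt⟩ := Finset.mem_filter.1 hj
      rw [hS', Finset.mem_filter]
      refine ⟨hi, ?_⟩
      by_contra hfalse
      rw [Bool.not_eq_true] at hfalse
      exact hadm' i j hij ((hfree_iff i).2 hi) ((hfree_iff j).2 hjF) ⟨hfalse, hjt⟩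
    have hSS' : S = S' := uniq_prefix hSF hS'F (by rw [hScard, hS'card]) hSdc hS'dc
    funext i
    by_cases hiF : i ∈ F
    · have hiE := hFnotE i hiF
      by_cases hiS : i ∈ S
      · have hiS' : i ∈ S' := by rw [← hSS']; exact hiS
        have : lam' i = true := (Finset.mem_filter.1 hiS').2
        rw [this]
        simp [Finset.mem_union, hiS]
      · have hne' : lam' i ≠ true := fun h => hiS (by rw [hSS']; exact Finset.mem_filter.2 ⟨hiF, h⟩)
        have hfi : lam' i = false := by
          cases h : lam' i
          · rfl
          · exact absurd h hne'
        rw [hfi]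
        simp [Finset.mem_union, hiS, hiE.2]
    · rw [hF, Finset.mem_sdiff] at hiF
      simp only [Finset.mem_univ, true_and, not_not] at hiF
      rcases Finset.mem_union.1 hiF with h | h
      · obtain ⟨p, hp, rfl⟩ := Finset.mem_image.1 h
        rw [hL1 p hp]
        symm
        simp only [decide_eq_false_iff_not]
        exact hp1not p hp
      · obtain ⟨p, hp, rfl⟩ := Finset.mem_image.1 h
        rw [hL2 p hp]
        simp [Finset.mem_union, hp2mem p hp]
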